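/- For all x ≥ 0, the inequality 9·h₀(x/3) ≤ 9·h₁(x/3) ≤ h(1+x) holds. -/

import Mathlib

noncomputable def h (x : ℝ) : ℝ := x * (Real.log x - 1) + 1
noncomputable def h₁ (x : ℝ) : ℝ := 1 + x - Real.sqrt (1 + 2 * x)
noncomputable def h₀ (x : ℝ) : ℝ := x ^ 2 / (2 * (1 + x))

noncomputable def gAux (x : ℝ) : ℝ :=
  (1 + x) * Real.log (1 + x) - 4 * x - 9 + 3 * Real.sqrt (9 + 6 * x)

noncomputable def gAux' (x : ℝ) : ℝ :=
  Real.log (1 + x) - 3 + 9 / Real.sqrt (9 + 6 * x)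

lemma sqrt96_pos {x : ℝ} (hx : -1 < x) : 0 < Real.sqrt (9 + 6 * x) :=
  Real.sqrt_pos.mpr (by linarith)

lemma hasDerivAt_sqrt96 {x : ℝ} (hx : -1 < x) :
    HasDerivAt (fun x => Real.sqrt (9 + 6 * x)) (3 / Real.sqrt (9 + 6 * x)) x := by
  have h1 : HasDerivAt (fun x : ℝ => 9 + 6 * x) 6 x := by
    simpa using ((hasDerivAt_id x).const_mul 6).const_add 9
  have hne : (9 : ℝ) + 6 * x ≠ 0 := by linarith
  have := (Real.hasDerivAt_sqrt hne).comp x h1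
  refine this.congr_deriv ?_
  field_simp
  ring

lemma hasDerivAt_gAux {x : ℝ} (hx : -1 < x) : HasDerivAt gAux (gAux' x) x := by
  have h1x : (0 : ℝ) < 1 + x := by linarith
  have hu : HasDerivAt (fun x : ℝ => 1 + x) 1 x := by
    simpa using (hasDerivAt_id x).const_add 1
  have hl : HasDerivAt (fun x : ℝ => Real.log (1 + x)) (1 / (1 + x)) x := by
    simpa [Function.comp_def] using (Real.hasDerivAt_log h1x.ne').comp x hu
  have hmul : HasDerivAt (fun x : ℝ => (1 + x) * Real.log (1 + x))
      (Real.log (1 + x) + 1) x := by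
    have := hu.mul hl
    refine this.congr_deriv ?_
    field_simp
  have hs := (hasDerivAt_sqrt96 hx).const_mul 3
  have hlin : HasDerivAt (fun x : ℝ => 4 * x + 9) 4 x := by
    simpa using ((hasDerivAt_id x).const_mul 4).add_const 9
  have heq : gAux = fun x => (1 + x) * Real.log (1 + x) - (4 * x + 9) + 3 * Real.sqrt (9 + 6 * x) := by
    funext y; rw [gAux]; ring
  rw [heq]
  refine ((hmul.sub hlin).add hs).congr_deriv ?_
  have hs' := (sqrt96_pos hx).ne'
  rw [gAux']
  field_simp
  ring

lemma hasDerivAt_gAux' {x : ℝ} (hx : -1 < x) :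
    HasDerivAt gAux'
      (1 / (1 + x) - 27 / ((9 + 6 * x) * Real.sqrt (9 + 6 * x))) x := by
  have h1x : (0 : ℝ) < 1 + x := by linarith
  have hu : HasDerivAt (fun x : ℝ => 1 + x) 1 x := by
    simpa using (hasDerivAt_id x).const_add 1
  have hl : HasDerivAt (fun x : ℝ => Real.log (1 + x)) (1 / (1 + x)) x := by
    simpa [Function.comp_def] using (Real.hasDerivAt_log h1x.ne').comp x hu
  have hsp := sqrt96_pos hx
  have hinv := ((hasDerivAt_sqrt96 hx).inv hsp.ne').const_mul 9
  have hsum := (hl.sub_const 3).add hinv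
  have hsq : Real.sqrt (9 + 6 * x) ^ 2 = 9 + 6 * x := Real.sq_sqrt (by linarith)
  have heq : gAux' = fun x => Real.log (1 + x) - 3 + 9 * (Real.sqrt (9 + 6 * x))⁻¹ := by
    funext y; rw [gAux', div_eq_mul_inv]
  rw [heq]
  refine hsum.congr_deriv ?_
  have hcube : (9 + 6 * x) * Real.sqrt (9 + 6 * x) = Real.sqrt (9 + 6 * x) ^ 3 := by
    have h3 : Real.sqrt (9 + 6 * x) ^ 3 = Real.sqrt (9 + 6 * x) ^ 2 * Real.sqrt (9 + 6 * x) := by ring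
    rw [h3, hsq]
  rw [hcube]
  field_simp
  ring

lemma sqrt9 : Real.sqrt 9 = 3 := by
  rw [show (9 : ℝ) = 3 ^ 2 by norm_num, Real.sqrt_sq (by norm_num)]

lemma sqrt96_ge {x : ℝ} (hx : 0 ≤ x) : 3 ≤ Real.sqrt (9 + 6 * x) := by
  have : Real.sqrt 9 ≤ Real.sqrt (9 + 6 * x) := Real.sqrt_le_sqrt (by linarith)
  rwa [sqrt9] at this

lemma gAux'_nonneg {x : ℝ} (hx : 0 ≤ x) : 0 ≤ gAux' x := by
  have hmono : MonotoneOn gAux' (Set.Ici 0) := by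
    apply monotoneOn_of_deriv_nonneg (convex_Ici 0)
    · intro y hy
      exact (hasDerivAt_gAux' (by simp at hy; linarith)).continuousAt.continuousWithinAt
    · intro y hy
      rw [interior_Ici] at hy
      exact (hasDerivAt_gAux' (by simp at hy; linarith)).differentiableAt.differentiableWithinAt
    · intro y hy
      rw [interior_Ici] at hy
      have hy0 : (0 : ℝ) < y := hy
      rw [(hasDerivAt_gAux' (by linarith)).deriv]
      have hsp := sqrt96_pos (by linarith : (-1 : ℝ) < y)
      have hsq : Real.sqrt (9 + 6 * y) ^ 2 = 9 + 6 * y := Real.sq_sqrt (by linarith)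
      have hs3 : 3 ≤ Real.sqrt (9 + 6 * y) := sqrt96_ge hy0.le
      set s := Real.sqrt (9 + 6 * y) with hs
      rw [sub_nonneg, div_le_div_iff₀ (by positivity) (by linarith)]
      nlinarith [sq_nonneg (s - 3), hsp, mul_nonneg (mul_nonneg (sub_nonneg.2 hs3) (sub_nonneg.2 hs3)) (by linarith : (0:ℝ) ≤ 2 * s + 3)]
  have h0 : gAux' 0 = 0 := by
    norm_num [gAux', sqrt9]
  have := hmono (Set.self_mem_Ici) (Set.mem_Ici.2 hx) hx
  linarith [h0 ▸ this]

lemma gAux_nonneg {x : ℝ} (hx : 0 ≤ x) : 0 ≤ gAux x := by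
  have hmono : MonotoneOn gAux (Set.Ici 0) := by
    apply monotoneOn_of_deriv_nonneg (convex_Ici 0)
    · intro y hy
      exact (hasDerivAt_gAux (by simp at hy; linarith)).continuousAt.continuousWithinAt
    · intro y hy
      rw [interior_Ici] at hy
      exact (hasDerivAt_gAux (by simp at hy; linarith)).differentiableAt.differentiableWithinAt
    · intro y hy
      rw [interior_Ici] at hy
      have hy0 : (0 : ℝ) < y := hy
      rw [(hasDerivAt_gAux (by linarith)).deriv]
      exact gAux'_nonneg hy0.le
  have h0 : gAux 0 = 0 := by
    norm_num [gAux, sqrt9]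
  have := hmono (Set.self_mem_Ici) (Set.mem_Ici.2 hx) hx
  linarith [h0 ▸ this]

theorem nine_h0_le_nine_h1_le_h (x : ℝ) (hx : 0 ≤ x) :
    9 * h₀ (x / 3) ≤ 9 * h₁ (x / 3) ∧ 9 * h₁ (x / 3) ≤ h (1 + x) := by
  have hy : (0 : ℝ) ≤ x / 3 := by linarith
  set y := x / 3 with hyd
  have hs0 : (0 : ℝ) ≤ 1 + 2 * y := by linarith
  have hsnn := Real.sqrt_nonneg (1 + 2 * y)
  have hssq : Real.sqrt (1 + 2 * y) ^ 2 = 1 + 2 * y := Real.sq_sqrt hs0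
  constructor
  · rw [h₀, h₁]
    have hden : (0 : ℝ) < 2 * (1 + y) := by linarith
    rw [mul_comm (9:ℝ), mul_comm (9:ℝ), div_mul_eq_mul_div, div_le_iff₀ hden]
    set s := Real.sqrt (1 + 2 * y)
    nlinarith [sq_nonneg (2 * (1 + y) * s - (2 + 4 * y + y ^ 2)), sq_nonneg s, sq_nonneg (s - 1), sq_nonneg y]
  · have hg := gAux_nonneg hx
    rw [gAux] at hg
    have hsq96 : Real.sqrt (9 + 6 * x) = 3 * Real.sqrt (1 + 2 * y) := by
      rw [show (9 : ℝ) + 6 * x = 9 * (1 + 2 * y) by rw [hyd]; ring,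
        Real.sqrt_mul (by norm_num), sqrt9]
    rw [h, h₁]
    have hlx : (1 + x) * Real.log (1 + x) - 4 * x - 9 + 3 * (3 * Real.sqrt (1 + 2 * y)) ≥ 0 := by
      rw [← hsq96]; linarith
    have hxy : x = 3 * y := by rw [hyd]; ring
    nlinarith [hlx]
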